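/- Let K ∈ ℝ^{N×N}, H_e, H_r ∈ ℝ^{N×s}, and diagonal Σ ∈ ℝ^{s×s} with positive entries satisfy K H_r = H_e Σ and K^⊤ H_e = H_r Σ. Then for every column index l, ‖H_e[:,l]‖ = ‖H_r[:,l]‖, i.e., corresponding columns of H_e and H_r have equal Euclidean norms. -/
import Mathlib


open Matrix

/-- Matrix form of the equal-norm property: at a stationary solution of the KSVD
shifted eigenvalue problem, corresponding columns of `H_e` and `H_r` have equal
Euclidean norms. -/
theorem ksvd_columns_equal_norms
    (N s : ℕ) (K : Matrix (Fin N) (Fin N) ℝ)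
    (He Hr : Matrix (Fin N) (Fin s) ℝ) (σ : Fin s → ℝ) (hσ : ∀ l, 0 < σ l)
    (h1 : K * Hr = He * Matrix.diagonal σ)
    (h2 : Kᵀ * He = Hr * Matrix.diagonal σ) :
    ∀ l : Fin s,
      Real.sqrt ((fun i => He i l) ⬝ᵥ (fun i => He i l)) =
      Real.sqrt ((fun i => Hr i l) ⬝ᵥ (fun i => Hr i l)) := by
  intro l
  have key : σ l * ((fun i => He i l) ⬝ᵥ (fun i => He i l)) =
      σ l * ((fun i => Hr i l) ⬝ᵥ (fun i => Hr i l)) := by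
    have e1 : ∑ i, He i l * (K * Hr) i l = σ l * ∑ i, He i l * He i l := by
      simp only [h1, Matrix.mul_diagonal, Finset.mul_sum]
      congr 1; ext i; ring
    have e2 : ∑ i, He i l * (K * Hr) i l = σ l * ∑ j, Hr j l * Hr j l := by
      have swap : ∑ i, He i l * (K * Hr) i l = ∑ j, (Kᵀ * He) j l * Hr j l := by
        simp only [Matrix.mul_apply, Matrix.transpose_apply, Finset.mul_sum,
          Finset.sum_mul]
        rw [Finset.sum_comm]
        congr 1; ext j; congr 1; ext i; ring
      rw [swap, h2]
      simp only [Matrix.mul_diagonal, Finset.mul_sum]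
      congr 1; ext j; ring
    simp only [dotProduct]
    rw [← e1, e2]
  have := mul_left_cancel₀ (ne_of_gt (hσ l)) key
  rw [this]
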